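/- arXiv:2409.18021 — 5 statements merged into one kernel-verified Lean document; each statement's English description precedes it below -/
import Mathlib

section
/- Let p be a prime, let F ∈ ℤ_p⟦T⟧ be nonzero, and let n ≥ 0 be an integer such that λ(F) < p^n. Suppose F = ω_n·Q + R for some Q ∈ ℤ_p⟦T⟧ and some polynomial R ∈ ℤ_p[T] of degree < p^n. Then R ≠ 0, μ(R) = μ(F), and λ(R) = λ(F). -/
open PowerSeries Polynomial Classical in
/-- `p`-adic valuation on `ℤ_[p]`, with value `⊤` at `0`. -/
noncomputable def vp (p : ℕ) [Fact p.Prime] (x : ℤ_[p]) : ℕ∞ :=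
  if x = 0 then ⊤ else x.valuation

/-- Iwasawa `μ`-invariant: the minimum of the `p`-adic valuations of the coefficients. -/
noncomputable def mu (p : ℕ) [Fact p.Prime] (F : PowerSeries ℤ_[p]) : ℕ∞ :=
  ⨅ i : ℕ, vp p (PowerSeries.coeff i F)

/-- Iwasawa `λ`-invariant: the least index whose coefficient valuation attains `μ`. -/
noncomputable def lam (p : ℕ) [Fact p.Prime] (F : PowerSeries ℤ_[p]) : ℕ :=
  sInf { i : ℕ | vp p (PowerSeries.coeff i F) = mu p F }

lemma dvd_iff_le_vp {p : ℕ} [Fact p.Prime] (x : ℤ_[p]) (k : ℕ) :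
    (p : ℤ_[p]) ^ k ∣ x ↔ (k : ℕ∞) ≤ vp p x := by
  unfold vp
  by_cases hx : x = 0
  · simp [hx]
  · rw [if_neg hx, ← Ideal.mem_span_singleton,
      PadicInt.mem_span_pow_iff_le_valuation x hx, Nat.cast_le]

lemma vp_eq_iff {p : ℕ} [Fact p.Prime] (x : ℤ_[p]) (k : ℕ) :
    vp p x = (k : ℕ∞) ↔ ((p : ℤ_[p]) ^ k ∣ x ∧ ¬ (p : ℤ_[p]) ^ (k+1) ∣ x) := by
  rw [dvd_iff_le_vp, dvd_iff_le_vp, Nat.cast_add, Nat.cast_one]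
  constructor
  · rintro h; rw [h]
    exact ⟨le_refl _, by simpa using (ENat.lt_add_one_iff (by simp)).2 (le_refl _)⟩
  · rintro ⟨h1, h2⟩
    exact le_antisymm (by have := not_le.1 h2; exact Order.le_of_lt_add_one this) h1

lemma vp_zero {p : ℕ} [Fact p.Prime] : vp p 0 = ⊤ := by simp [vp]

theorem stmt_0 (p : ℕ) [Fact p.Prime] (F : PowerSeries ℤ_[p]) (hF : F ≠ 0)
    (n : ℕ) (hlam : lam p F < p ^ n)
    (Q : PowerSeries ℤ_[p]) (R : Polynomial ℤ_[p]) (hdeg : R.degree < (p ^ n : ℕ))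
    (hFQR : F = (((1 + Polynomial.X) ^ p ^ n - 1 : Polynomial ℤ_[p]) : PowerSeries ℤ_[p]) * Q
      + (R : PowerSeries ℤ_[p])) :
    R ≠ 0 ∧ mu p (R : PowerSeries ℤ_[p]) = mu p F ∧ lam p (R : PowerSeries ℤ_[p]) = lam p F := by
  have hp : p.Prime := Fact.out
  set N := p ^ n with hN
  set ω : Polynomial ℤ_[p] := (1 + Polynomial.X) ^ N - 1 with hω
  have hNpos : 0 < N := pow_pos hp.pos n
  -- coefficients of ω
  have hωc : ∀ j, ω.coeff j = (N.choose j : ℤ_[p]) - if j = 0 then 1 else 0 := by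
    intro j
    simp [hω, Polynomial.coeff_sub, Polynomial.coeff_one_add_X_pow, Polynomial.coeff_one]
  have hω_lt : ∀ j < N, (p : ℤ_[p]) ∣ ω.coeff j := by
    intro j hj
    rcases Nat.eq_zero_or_pos j with rfl | hj0
    · rw [hωc]; simp
    · rw [hωc, if_neg hj0.ne']
      have : (p : ℕ) ∣ N.choose j := Nat.Prime.dvd_choose_pow hp hj0.ne' hj.ne
      rw [sub_zero]
      exact_mod_cast (Nat.cast_dvd_cast this : ((p : ℕ) : ℤ_[p]) ∣ (N.choose j : ℤ_[p]))
  have hωN : ω.coeff N = 1 := by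
    rw [hωc, if_neg hNpos.ne', Nat.choose_self]; simp
  have hω_gt : ∀ j, N < j → ω.coeff j = 0 := by
    intro j hj
    rw [hωc, if_neg (by omega), Nat.choose_eq_zero_of_lt hj]; simp
  -- coefficient identity
  have hcoeff : ∀ i, PowerSeries.coeff i F =
      (∑ jk ∈ Finset.HasAntidiagonal.antidiagonal i,
        ω.coeff jk.1 * PowerSeries.coeff jk.2 Q) + R.coeff i := by
    intro i
    rw [hFQR, map_add, PowerSeries.coeff_mul, Polynomial.coeff_coe]
    congr 1
    exact Finset.sum_congr rfl (fun jk _ => by rw [Polynomial.coeff_coe])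
  have hr0 : ∀ i, N ≤ i → R.coeff i = 0 := by
    intro i hi
    apply Polynomial.coeff_eq_zero_of_degree_lt
    exact lt_of_lt_of_le hdeg (by exact_mod_cast hi)
  -- μ(F) is attained
  have hexist : ∃ i, PowerSeries.coeff i F ≠ 0 := by
    by_contra h
    push_neg at h
    exact hF (PowerSeries.ext fun i => by simpa using h i)
  set S : Set ℕ := {k | ∃ i, vp p (PowerSeries.coeff i F) = (k : ℕ∞)} with hS
  have hSne : S.Nonempty := by
    obtain ⟨i, hi⟩ := hexist
    exact ⟨((PowerSeries.coeff i F).valuation), ⟨i, by simp [vp, hi]⟩⟩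
  set m := sInf S with hm
  obtain ⟨i0, hi0⟩ : m ∈ S := Nat.sInf_mem hSne
  have hlow : ∀ i, (m : ℕ∞) ≤ vp p (PowerSeries.coeff i F) := by
    intro i
    by_cases h : PowerSeries.coeff i F = 0
    · simp [h, vp_zero]
    · have : vp p (PowerSeries.coeff i F)
          = (((PowerSeries.coeff i F).valuation : ℕ) : ℕ∞) := by simp [vp, h]
      rw [this, Nat.cast_le]
      exact Nat.sInf_le ⟨i, this⟩
  have hmu : mu p F = (m : ℕ∞) :=
    le_antisymm (hi0 ▸ iInf_le _ i0) (le_iInf hlow)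
  have hdvdF : ∀ i, (p : ℤ_[p]) ^ m ∣ PowerSeries.coeff i F :=
    fun i => (dvd_iff_le_vp _ m).2 (hlow i)
  -- λ(F) attains μ(F)
  have hlamF : vp p (PowerSeries.coeff (lam p F) F) = (m : ℕ∞) := by
    have hne : {i : ℕ | vp p (PowerSeries.coeff i F) = mu p F}.Nonempty :=
      ⟨i0, by rw [Set.mem_setOf_eq, hmu]; exact hi0⟩
    have h2 : vp p (PowerSeries.coeff (lam p F) F) = mu p F := Nat.sInf_mem hne
    rw [hmu] at h2
    exact h2
  -- key induction: p^m divides all coefficients of Q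
  have hq : ∀ k, k ≤ m → ∀ i, (p : ℤ_[p]) ^ k ∣ PowerSeries.coeff i Q := by
    intro k
    induction k with
    | zero => intro _ i; simp
    | succ k ih =>
      intro hk i
      have hqk := ih (Nat.le_of_succ_le hk)
      have h1 := hcoeff (i + N)
      rw [hr0 _ (Nat.le_add_left N i), add_zero] at h1
      have hmem : ((N, i) : ℕ × ℕ) ∈ Finset.HasAntidiagonal.antidiagonal (i + N) := by
        simp [add_comm]
      rw [← Finset.add_sum_erase _ _ hmem, hωN, one_mul] at h1
      have h2 : PowerSeries.coeff i Q = PowerSeries.coeff (i + N) F -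
          ∑ jk ∈ (Finset.HasAntidiagonal.antidiagonal (i + N)).erase (N, i),
            ω.coeff jk.1 * PowerSeries.coeff jk.2 Q := by
        rw [h1]; ring
      rw [h2]
      apply dvd_sub
      · exact dvd_trans (pow_dvd_pow _ hk) (hdvdF (i + N))
      · apply Finset.dvd_sum
        intro jk hjk
        have hjk1 := Finset.mem_erase.1 hjk
        have hsum : jk.1 + jk.2 = i + N := Finset.HasAntidiagonal.mem_antidiagonal.1 hjk1.2
        rcases lt_trichotomy jk.1 N with h | h | h
        · rw [pow_succ']
          exact mul_dvd_mul (hω_lt _ h) (hqk jk.2)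
        · exfalso
          apply hjk1.1
          have : jk.2 = i := by omega
          rw [Prod.ext_iff]; exact ⟨h.symm ▸ rfl, this⟩
        · rw [hω_gt _ h, zero_mul]
          exact dvd_zero _
  have hQ : ∀ i, (p : ℤ_[p]) ^ m ∣ PowerSeries.coeff i Q := hq m le_rfl
  -- p^(m+1) divides f i - r i for i < N
  have hfr : ∀ i, i < N → (p : ℤ_[p]) ^ (m + 1) ∣
      (PowerSeries.coeff i F - R.coeff i) := by
    intro i hi
    rw [hcoeff i, add_sub_cancel_right]
    apply Finset.dvd_sum
    intro jk hjk
    have hsum : jk.1 + jk.2 = i := Finset.HasAntidiagonal.mem_antidiagonal.1 hjk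
    have : jk.1 < N := by omega
    rw [pow_succ']
    exact mul_dvd_mul (hω_lt _ this) (hQ jk.2)
  have hrdvd : ∀ i, i < N → (p : ℤ_[p]) ^ m ∣ R.coeff i := by
    intro i hi
    have h1 : R.coeff i = PowerSeries.coeff i F -
        (PowerSeries.coeff i F - R.coeff i) := by ring
    rw [h1]
    exact dvd_sub (hdvdF i) (dvd_trans (pow_dvd_pow _ (Nat.le_succ m)) (hfr i hi))
  have hiff : ∀ i, i < N →
      (vp p (R.coeff i) = (m : ℕ∞) ↔ vp p (PowerSeries.coeff i F) = (m : ℕ∞)) := by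
    intro i hi
    rw [vp_eq_iff, vp_eq_iff]
    have hdvd_iff : (p : ℤ_[p]) ^ (m+1) ∣ R.coeff i ↔
        (p : ℤ_[p]) ^ (m+1) ∣ PowerSeries.coeff i F := by
      constructor
      · intro h
        have : PowerSeries.coeff i F =
            (PowerSeries.coeff i F - R.coeff i) + R.coeff i := by ring
        rw [this]; exact dvd_add (hfr i hi) h
      · intro h
        have : R.coeff i = PowerSeries.coeff i F -
            (PowerSeries.coeff i F - R.coeff i) := by ring
        rw [this]; exact dvd_sub h (hfr i hi)
    constructor
    · rintro ⟨_, h2⟩; exact ⟨hdvdF i, fun h => h2 (hdvd_iff.2 h)⟩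
    · rintro ⟨_, h2⟩; exact ⟨hrdvd i hi, fun h => h2 (hdvd_iff.1 h)⟩
  -- value at λ(F)
  have hrlam : vp p (R.coeff (lam p F)) = (m : ℕ∞) := (hiff _ hlam).2 hlamF
  have hRlam_ne : R.coeff (lam p F) ≠ 0 := by
    intro h
    rw [h, vp_zero] at hrlam
    exact (ENat.coe_ne_top m) hrlam.symm
  have hRne : R ≠ 0 := fun h => hRlam_ne (by simp [h])
  -- μ(R) = m
  have hmuR : mu p (R : PowerSeries ℤ_[p]) = (m : ℕ∞) := by
    apply le_antisymm
    · have := iInf_le (fun i => vp p (PowerSeries.coeff i (R : PowerSeries ℤ_[p]))) (lam p F)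
      rw [Polynomial.coeff_coe] at this
      exact hrlam ▸ this
    · apply le_iInf
      intro i
      rw [Polynomial.coeff_coe]
      rcases lt_or_ge i N with h | h
      · rw [← dvd_iff_le_vp]; exact hrdvd i h
      · rw [hr0 i h, vp_zero]; exact le_top
  refine ⟨hRne, hmuR.trans hmu.symm, ?_⟩
  -- λ(R) = λ(F)
  apply le_antisymm
  · apply Nat.sInf_le
    rw [Set.mem_setOf_eq, Polynomial.coeff_coe, hmuR]
    exact hrlam
  · apply le_csInf
    · exact ⟨lam p F, by rw [Set.mem_setOf_eq, Polynomial.coeff_coe, hmuR]; exact hrlam⟩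
    · intro i hi
      rw [Set.mem_setOf_eq, Polynomial.coeff_coe, hmuR] at hi
      have hiN : i < N := by
        by_contra h
        push_neg at h
        rw [hr0 i h, vp_zero] at hi
        exact (ENat.coe_ne_top m) hi.symm
      have : vp p (PowerSeries.coeff i F) = (m : ℕ∞) := (hiff i hiN).1 hi
      exact Nat.sInf_le (by rw [Set.mem_setOf_eq, hmu]; exact this)
end

section
/- Let p be a prime, let F ∈ ℤ_p⟦T⟧ be nonzero with μ(F) = 0, and let n ≥ 0 satisfy λ(F) < p^n. Suppose F = ω_n·Q + R with Q ∈ ℤ_p⟦T⟧ and R ∈ ℤ_p[T] a nonzero polynomial of degree < p^n. Then λ(R) = λ(F). -/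
section Aux

variable {p : ℕ} [hp : Fact p.Prime]

lemma vp_zero_iff (x : ℤ_[p]) : vp p x = 0 ↔ ¬ (p : ℤ_[p]) ∣ x := by
  rw [← PadicInt.norm_lt_one_iff_dvd, not_lt]
  unfold vp
  split_ifs with hx
  · subst hx
    simp
  · constructor
    · intro h
      have hv : x.valuation = 0 := by
        have h0 := Nat.zero_le x.valuation
        have h1 : x.valuation = 0 := by exact_mod_cast h
        omega
      rw [PadicInt.norm_eq_zpow_neg_valuation hx, hv]
      norm_num
    · intro h
      have h1 : ‖x‖ = 1 := le_antisymm (PadicInt.norm_le_one x) h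
      have hv : x.valuation = 0 := by
        have h2 := PadicInt.norm_eq_zpow_neg_valuation hx
        rw [h1] at h2
        have hp1 : (1 : ℝ) < p := by exact_mod_cast hp.out.one_lt
        have h3 : (p : ℝ) ^ (-(x.valuation : ℤ)) = (p : ℝ) ^ (0 : ℤ) := by
          rw [h2.symm, zpow_zero]
        have h4 := (zpow_right_strictMono₀ hp1).injective h3
        omega
      simp [hv]

lemma mu_zero_exists {F : PowerSeries ℤ_[p]} (h : mu p F = 0) :
    ∃ i, vp p (PowerSeries.coeff i F) = 0 := by
  by_contra hc
  push_neg at hc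
  have h1 : (1 : ℕ∞) ≤ mu p F :=
    le_iInf fun i => ENat.one_le_iff_ne_zero.2 (hc i)
  rw [h] at h1
  simp at h1

end Aux

theorem stmt_2 (p : ℕ) [Fact p.Prime] (F : PowerSeries ℤ_[p]) (hF : F ≠ 0)
    (hmu : mu p F = 0) (n : ℕ) (hlam : lam p F < p ^ n)
    (Q : PowerSeries ℤ_[p]) (R : Polynomial ℤ_[p]) (hR : R ≠ 0)
    (hdeg : R.degree < (p ^ n : ℕ))
    (hFQR : F = (((1 + Polynomial.X) ^ p ^ n - 1 : Polynomial ℤ_[p]) : PowerSeries ℤ_[p]) * Q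
      + (R : PowerSeries ℤ_[p])) :
    lam p (R : PowerSeries ℤ_[p]) = lam p F := by
  have hpp := (Fact.out : p.Prime)
  set ω : Polynomial ℤ_[p] := (1 + Polynomial.X) ^ p ^ n - 1 with hωdef
  -- all low coefficients of ω are divisible by p
  have hω : ∀ j < p ^ n, (p : ℤ_[p]) ∣ ω.coeff j := by
    intro j hj
    rw [hωdef, Polynomial.coeff_sub, Polynomial.coeff_one_add_X_pow]
    rcases eq_or_ne j 0 with rfl | hj0
    · simp
    · rw [Polynomial.coeff_one, if_neg hj0, sub_zero]
      have hd : p ∣ (p ^ n).choose j := hpp.dvd_choose_pow hj0 (Nat.ne_of_lt hj)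
      exact_mod_cast (Nat.cast_dvd_cast hd : ((p : ℤ_[p])) ∣ (((p ^ n).choose j : ℕ) : ℤ_[p]))
  -- divisibility of coefficients of F and R agree below p ^ n
  have hdvd : ∀ i < p ^ n,
      ((p : ℤ_[p]) ∣ PowerSeries.coeff i F ↔
        (p : ℤ_[p]) ∣ PowerSeries.coeff i (R : PowerSeries ℤ_[p])) := by
    intro i hi
    have hkey : (p : ℤ_[p]) ∣ PowerSeries.coeff i ((ω : PowerSeries ℤ_[p]) * Q) := by
      rw [PowerSeries.coeff_mul]
      refine Finset.dvd_sum ?_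
      rintro ⟨a, b⟩ hab
      replace hab : a + b = i := by simpa using hab
      have ha : a < p ^ n := lt_of_le_of_lt (hab ▸ Nat.le_add_right a b) hi
      have : (p : ℤ_[p]) ∣ PowerSeries.coeff a (ω : PowerSeries ℤ_[p]) := by
        rw [Polynomial.coeff_coe]
        exact hω a ha
      exact this.mul_right _
    rw [hFQR, map_add]
    exact dvd_add_right hkey
  -- lam p F is the least index with vp = 0
  have hset : {i : ℕ | vp p (PowerSeries.coeff i F) = mu p F} =
      {i : ℕ | vp p (PowerSeries.coeff i F) = 0} := by rw [hmu]
  have hne : {i : ℕ | vp p (PowerSeries.coeff i F) = mu p F}.Nonempty := by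
    obtain ⟨i, hi⟩ := mu_zero_exists hmu
    exact ⟨i, by rw [hmu]; exact hi⟩
  set l := lam p F with hl
  have hlmem : vp p (PowerSeries.coeff l F) = 0 := by
    have h2 : vp p (PowerSeries.coeff (lam p F) F) = mu p F := Nat.sInf_mem hne
    rw [hmu] at h2
    exact h2
  have hlmin : ∀ i < l, (p : ℤ_[p]) ∣ PowerSeries.coeff i F := by
    intro i hi
    have hnm : i ∉ {i : ℕ | vp p (PowerSeries.coeff i F) = mu p F} :=
      Nat.notMem_of_lt_sInf hi
    rw [hmu] at hnm
    by_contra hc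
    exact hnm ((vp_zero_iff _).2 hc)
  -- transfer to R
  have hlR : vp p (PowerSeries.coeff l (R : PowerSeries ℤ_[p])) = 0 := by
    rw [vp_zero_iff]
    rw [← hdvd l hlam]
    exact (vp_zero_iff _).1 hlmem
  have hmuR : mu p (R : PowerSeries ℤ_[p]) = 0 := by
    refine le_antisymm ?_ zero_le
    exact le_trans (iInf_le _ l) (le_of_eq hlR)
  have hmemR : l ∈ {i : ℕ | vp p (PowerSeries.coeff i (R : PowerSeries ℤ_[p]))
      = mu p (R : PowerSeries ℤ_[p])} := by
    rw [Set.mem_setOf_eq, hmuR]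
    exact hlR
  refine le_antisymm (Nat.sInf_le hmemR) ?_
  -- minimality
  have hneR : {i : ℕ | vp p (PowerSeries.coeff i (R : PowerSeries ℤ_[p]))
      = mu p (R : PowerSeries ℤ_[p])}.Nonempty := ⟨l, hmemR⟩
  by_contra hc
  push_neg at hc
  have hmem := Nat.sInf_mem hneR
  set k := lam p (R : PowerSeries ℤ_[p]) with hk
  have hkl : k < l := hc
  have hkp : k < p ^ n := lt_trans hkl hlam
  have h1 : vp p (PowerSeries.coeff k (R : PowerSeries ℤ_[p])) = 0 := by
    have h2 : vp p (PowerSeries.coeff (lam p (R : PowerSeries ℤ_[p]))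
        (R : PowerSeries ℤ_[p])) = mu p (R : PowerSeries ℤ_[p]) := Nat.sInf_mem hneR
    rw [hmuR] at h2
    exact h2
  have h2 : (p : ℤ_[p]) ∣ PowerSeries.coeff k (R : PowerSeries ℤ_[p]) :=
    (hdvd k hkp).1 (hlmin k hkl)
  exact (vp_zero_iff _).1 h1 h2
end

section
/- Let p be a prime and let n ≥ 1 be an odd integer. The polynomial ω_n^+ = ∏_{1 ≤ i ≤ n, i even} Φ_{p^i}(1+T) ∈ ℤ_p[T] satisfies μ(ω_n^+) = 0 and λ(ω_n^+) = (p^n − p)/(p + 1). -/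
open Polynomial in
lemma sum_aux' (p : ℕ) (hp : 2 ≤ p) (m : ℕ) :
    (∑ i ∈ (Finset.Icc 1 (2*m+1)).filter (fun i => Even i), (p ^ i - p ^ (i-1))) * (p + 1)
      = p ^ (2*m+1) - p := by
  induction m with
  | zero => simp [Finset.Icc_self, Finset.filter_singleton]
  | succ m ih =>
    have h3 : 2*(m+1)+1 = (2*m+1)+1+1 := by ring
    rw [h3, Finset.sum_filter, Finset.sum_Icc_succ_top (by omega), Finset.sum_Icc_succ_top (by omega),
      ← Finset.sum_filter]
    have he : Even ((2*m+1)+1) := by simp [Nat.even_add_one, Nat.odd_iff]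
    have ho : ¬ Even ((2*m+1)+1+1) := by simp [Nat.even_add_one, Nat.odd_iff]
    rw [if_pos he, if_neg ho, add_zero]
    have h1 : p ≤ p ^ (2*m+1) := Nat.le_self_pow (by omega) p
    have h2 : p ^ (2*m+1) ≤ p ^ (2*m+2) := Nat.pow_le_pow_right (by omega) (by omega)
    have h4 : p ^ (2*m+2) ≤ p ^ (2*m+3) := Nat.pow_le_pow_right (by omega) (by omega)
    have h5 : p ≤ p ^ (2*m+3) := Nat.le_self_pow (by omega) p
    have hsub : (2*m+1)+1 - 1 = 2*m+1 := by omega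
    rw [hsub]
    zify [h1, h2, h4, h5] at ih ⊢
    linear_combination ih

open Polynomial in
theorem stmt_9 (p : ℕ) [Fact p.Prime] (n : ℕ) (hn1 : 1 ≤ n) (hn : Odd n) :
    mu p ((∏ i ∈ (Finset.Icc 1 n).filter (fun i => Even i),
        (Polynomial.cyclotomic (p ^ i) ℤ_[p]).comp (1 + Polynomial.X) : Polynomial ℤ_[p]) : PowerSeries ℤ_[p]) = 0
      ∧ lam p ((∏ i ∈ (Finset.Icc 1 n).filter (fun i => Even i),
        (Polynomial.cyclotomic (p ^ i) ℤ_[p]).comp (1 + Polynomial.X) : Polynomial ℤ_[p]) : PowerSeries ℤ_[p])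
        = (p ^ n - p) / (p + 1) := by
  have hp : p.Prime := Fact.out
  set s : Finset ℕ := (Finset.Icc 1 n).filter (fun i => Even i) with hs
  set F : Polynomial ℤ_[p] := ∏ i ∈ s, (cyclotomic (p ^ i) ℤ_[p]).comp (1 + X) with hF
  set d : ℕ := ∑ i ∈ s, (p ^ i - p ^ (i-1)) with hd
  -- monicity
  have h1X : (1 + X : Polynomial ℤ_[p]).Monic := by
    simpa [add_comm] using monic_X_add_C (1 : ℤ_[p])
  have hmon : ∀ i ∈ s, ((cyclotomic (p ^ i) ℤ_[p]).comp (1 + X)).Monic := fun i _ =>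
    (cyclotomic.monic _ _).comp h1X (by
      have : (1 + X : Polynomial ℤ_[p]) = X + C 1 := by simp [add_comm]
      rw [this, natDegree_X_add_C]; omega)
  have hFmon : F.Monic := monic_prod_of_monic _ _ hmon
  -- degree
  have hdeg : F.natDegree = d := by
    rw [hF, natDegree_prod _ _ (fun i hi => (hmon i hi).ne_zero)]
    refine Finset.sum_congr rfl fun i hi => ?_
    have hi1 : 1 ≤ i := (Finset.mem_Icc.1 (Finset.mem_filter.1 hi).1).1
    have h1Xd : (1 + X : Polynomial ℤ_[p]).natDegree = 1 := by
      have : (1 + X : Polynomial ℤ_[p]) = X + C 1 := by simp [add_comm]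
      rw [this, natDegree_X_add_C]
    rw [natDegree_comp, natDegree_cyclotomic, h1Xd, mul_one,
      Nat.totient_prime_pow hp (by omega)]
    have : p ^ i = p ^ (i - 1) * p := by
      conv_lhs => rw [show i = (i-1)+1 by omega, pow_succ]
    rw [this, Nat.mul_sub_one]
  -- reduction mod p
  have hmap : F.map (PadicInt.toZMod) = X ^ d := by
    rw [hF, Polynomial.map_prod, hd, ← Finset.prod_pow_eq_pow_sum]
    refine Finset.prod_congr rfl fun i hi => ?_
    have hi1 : 1 ≤ i := (Finset.mem_Icc.1 (Finset.mem_filter.1 hi).1).1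
    rw [Polynomial.map_comp, map_cyclotomic]
    have hc : cyclotomic (p ^ i) (ZMod p) = (X - 1) ^ (p ^ i - p ^ (i - 1)) := by
      have := cyclotomic_mul_prime_pow_eq (ZMod p) (p := p) (m := 1)
        (by simpa using hp.one_lt.ne') (show 0 < i by omega)
      simpa [cyclotomic_one] using this
    rw [hc]
    simp [pow_comp, sub_comp, Polynomial.map_add]
  -- coefficient facts
  have hcd : F.coeff d = 1 := by rw [← hdeg]; exact hFmon.coeff_natDegree
  have hcoeff0 : ∀ k, k ≠ d → PadicInt.toZMod (F.coeff k) = 0 := by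
    intro k hk
    have := congrArg (fun q => Polynomial.coeff q k) hmap
    simpa [Polynomial.coeff_map, Polynomial.coeff_X_pow, hk] using this
  have hvpd : vp p (F.coeff d) = 0 := by
    rw [hcd]; simp [vp, PadicInt.valuation_one]
  have hvpne : ∀ k, k ≠ d → vp p (F.coeff k) ≠ 0 := by
    intro k hk
    by_cases h0 : F.coeff k = 0
    · simp [vp, h0]
    · have hmem : F.coeff k ∈ (Ideal.span {(p : ℤ_[p]) ^ 1} : Ideal ℤ_[p]) := by
        rw [pow_one, ← PadicInt.maximalIdeal_eq_span_p, ← PadicInt.ker_toZMod]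
        exact hcoeff0 k hk
      have hval : 1 ≤ (F.coeff k).valuation := by
        exact_mod_cast (PadicInt.mem_span_pow_iff_le_valuation _ h0 1).1 hmem
      simp only [vp, if_neg h0]
      intro h
      have : (F.coeff k).valuation = 0 := by exact_mod_cast h
      omega
  -- mu = 0
  have hmu : mu p (F : PowerSeries ℤ_[p]) = 0 := by
    refine le_antisymm ?_ (zero_le)
    unfold mu
    refine iInf_le_of_le d ?_
    rw [Polynomial.coeff_coe, hvpd]
  refine ⟨hmu, ?_⟩
  -- lam = d
  have hset : {i : ℕ | vp p (PowerSeries.coeff i (F : PowerSeries ℤ_[p])) = mu p (F : PowerSeries ℤ_[p])} = {d} := by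
    ext k
    simp only [Set.mem_setOf_eq, hmu, Set.mem_singleton_iff, Polynomial.coeff_coe]
    constructor
    · intro h
      by_contra hk
      exact hvpne k hk h
    · rintro rfl; exact hvpd
  have hlam : lam p (F : PowerSeries ℤ_[p]) = d := by
    unfold lam
    rw [hset, csInf_singleton]
  rw [hlam]
  -- arithmetic
  obtain ⟨m, rfl⟩ := hn
  have h := sum_aux' p hp.two_le m
  rw [← hs] at h
  rw [← hd] at h
  rw [← h, Nat.mul_div_cancel _ (by omega)]
end

section
/- Let p be a prime and n ≥ 0 an integer. Let L ∈ ℤ_p⟦T⟧ be nonzero, let w ∈ ℤ_p[T] be a nonzero polynomial with μ(w) = 0, and let θ ∈ ℤ_p[T] be a polynomial of degree < p^n. Suppose that ω_n divides θ − w·L in ℤ_p⟦T⟧ and that λ(w) + λ(L) < p^n. Then θ ≠ 0, μ(θ) = μ(L), and λ(θ) = λ(w) + λ(L). -/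
section Aux

open PowerSeries

variable {p : ℕ} [Fact p.Prime]

lemma vp_eq_top_iff {x : ℤ_[p]} : vp p x = ⊤ ↔ x = 0 := by
  unfold vp; split_ifs with h <;> simp [h]

lemma le_vp_iff {x : ℤ_[p]} {k : ℕ} : (k : ℕ∞) ≤ vp p x ↔ (p : ℤ_[p]) ^ k ∣ x := by
  by_cases hx : x = 0
  · simp [hx, vp]
  · rw [vp, if_neg hx, Nat.cast_le,
      ← PadicInt.mem_span_pow_iff_le_valuation x hx, Ideal.mem_span_singleton]

lemma vp_one : vp p (1 : ℤ_[p]) = 0 := by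
  rw [vp, if_neg one_ne_zero, PadicInt.valuation_one]; rfl

lemma vp_mul (x y : ℤ_[p]) : vp p (x * y) = vp p x + vp p y := by
  by_cases hx : x = 0
  · simp [hx, vp]
  by_cases hy : y = 0
  · simp [hy, vp, if_neg hx]
  have hxy : x * y ≠ 0 := mul_ne_zero hx hy
  rw [vp, vp, vp, if_neg hx, if_neg hy, if_neg hxy]
  have hv : (x * y).valuation = x.valuation + y.valuation := by
    exact PadicInt.valuation_mul hx hy
  rw [hv]
  push_cast
  ring

lemma enat_eq_of_le_iff {a b : ℕ∞} (h : ∀ k : ℕ, (k : ℕ∞) ≤ a ↔ (k : ℕ∞) ≤ b) : a = b := by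
  have aux : ∀ a b : ℕ∞, (∀ k : ℕ, (k : ℕ∞) ≤ a ↔ (k : ℕ∞) ≤ b) → a ≤ b := by
    intro a b h
    by_cases ha : a = ⊤
    · subst ha
      by_contra hb
      have hb' : b ≠ ⊤ := fun hh => hb (hh ▸ le_rfl)
      lift b to ℕ using hb'
      have := (h (b + 1)).mp le_top
      exact absurd (Nat.cast_le.mp this) (by omega)
    · lift a to ℕ using ha
      exact (h a).mp le_rfl
  exact le_antisymm (aux a b h) (aux b a fun k => (h k).symm)

lemma vp_neg (x : ℤ_[p]) : vp p (-x) = vp p x :=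
  enat_eq_of_le_iff fun k => by rw [le_vp_iff, le_vp_iff, dvd_neg]

lemma vp_add_eq_left {x y : ℤ_[p]} {m : ℕ} (hx : vp p x = (m : ℕ∞))
    (hy : ((m : ℕ) + 1 : ℕ∞) ≤ vp p y) : vp p (x + y) = (m : ℕ∞) := by
  have hdx : (p : ℤ_[p]) ^ m ∣ x := le_vp_iff.mp hx.ge
  have hndx : ¬ (p : ℤ_[p]) ^ (m + 1) ∣ x := by
    intro hd
    have := le_vp_iff.mpr hd
    rw [hx] at this
    exact absurd (Nat.cast_le.mp this) (by omega)
  have hdy : (p : ℤ_[p]) ^ (m + 1) ∣ y := le_vp_iff.mp (by push_cast; exact hy)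
  have hlow : (m : ℕ∞) ≤ vp p (x + y) :=
    le_vp_iff.mpr (dvd_add hdx ((pow_dvd_pow _ (Nat.le_succ m)).trans hdy))
  have hhigh : ¬ ((m + 1 : ℕ) : ℕ∞) ≤ vp p (x + y) := by
    intro hh
    have hsum : (p : ℤ_[p]) ^ (m + 1) ∣ x + y := le_vp_iff.mp hh
    exact hndx (by simpa using dvd_sub hsum hdy)
  refine le_antisymm ?_ hlow
  have := not_le.mp hhigh
  rw [show ((m + 1 : ℕ) : ℕ∞) = (m : ℕ∞) + 1 by push_cast; ring] at this
  exact (ENat.lt_add_one_iff (by simp)).mp this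

lemma mu_le (F : PowerSeries ℤ_[p]) (i : ℕ) : mu p F ≤ vp p (coeff i F) :=
  iInf_le _ i

lemma mu_eq_top_iff {F : PowerSeries ℤ_[p]} : mu p F = ⊤ ↔ F = 0 := by
  rw [mu, iInf_eq_top]
  simp only [vp_eq_top_iff]
  constructor
  · intro h; ext i; simp [h i]
  · intro h i; simp [h]

lemma exists_vp_eq_mu (F : PowerSeries ℤ_[p]) :
    ∃ i, vp p (coeff i F) = mu p F := by
  let f : ℕ → ℕ∞ := fun i => vp p (coeff i F)
  obtain ⟨a, ha, hmin⟩ := wellFounded_lt.has_min (Set.range f) ⟨f 0, Set.mem_range_self 0⟩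
  obtain ⟨i, hi⟩ := ha
  have h1 : mu p F ≤ f i := iInf_le f i
  have h2 : f i ≤ mu p F := by
    refine le_iInf fun j => ?_
    have := not_lt.mp (hmin (f j) (Set.mem_range_self j))
    rw [← hi] at this
    exact this
  exact ⟨i, le_antisymm h2 h1⟩

lemma vp_lam (F : PowerSeries ℤ_[p]) :
    vp p (coeff (lam p F) F) = mu p F :=
  Nat.sInf_mem (exists_vp_eq_mu F)

lemma lam_min {F : PowerSeries ℤ_[p]} {i : ℕ} (h : i < lam p F) :
    vp p (coeff i F) ≠ mu p F :=
  Nat.notMem_of_lt_sInf h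

lemma lam_min' {F : PowerSeries ℤ_[p]} {m i : ℕ} (hmu : mu p F = (m : ℕ∞))
    (h : i < lam p F) : (m : ℕ∞) + 1 ≤ vp p (coeff i F) := by
  have h1 := lam_min h
  have h2 := mu_le F i
  rw [hmu] at h1 h2
  exact (ENat.add_one_le_iff (by simp)).mpr (lt_of_le_of_ne h2 (Ne.symm h1))

lemma mu_lam_spec {F : PowerSeries ℤ_[p]} {m l : ℕ}
    (h1 : ∀ i, (m : ℕ∞) ≤ vp p (coeff i F))
    (h2 : vp p (coeff l F) = (m : ℕ∞))
    (h3 : ∀ i < l, (m : ℕ∞) + 1 ≤ vp p (coeff i F)) :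
    mu p F = (m : ℕ∞) ∧ lam p F = l := by
  have hmu : mu p F = (m : ℕ∞) := le_antisymm (h2 ▸ mu_le F l) (le_iInf h1)
  refine ⟨hmu, le_antisymm (Nat.sInf_le (by simpa [Set.mem_setOf_eq, hmu] using h2)) ?_⟩
  by_contra hcon
  push_neg at hcon
  have hmem := vp_lam F
  rw [hmu] at hmem
  have := h3 _ hcon
  rw [hmem] at this
  have : (m : ℕ∞) < (m : ℕ∞) := lt_of_lt_of_le (by
    exact (ENat.lt_add_one_iff (by simp)).mpr le_rfl) this
  exact absurd this (lt_irrefl _)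

lemma mu_ne_top {F : PowerSeries ℤ_[p]} (hF : F ≠ 0) : ∃ m : ℕ, mu p F = (m : ℕ∞) := by
  have : mu p F ≠ ⊤ := fun h => hF (mu_eq_top_iff.mp h)
  lift mu p F to ℕ using this with m
  exact ⟨m, rfl⟩

lemma mu_lam_mul {F G : PowerSeries ℤ_[p]} (hF : F ≠ 0) (hG : G ≠ 0) :
    mu p (F * G) = mu p F + mu p G ∧ lam p (F * G) = lam p F + lam p G := by
  obtain ⟨a, ha⟩ := mu_ne_top hF
  obtain ⟨b, hb⟩ := mu_ne_top hG
  set lF := lam p F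
  set lG := lam p G
  have hFa : ∀ i, (p : ℤ_[p]) ^ a ∣ coeff i F := fun i =>
    le_vp_iff.mp (ha ▸ mu_le F i)
  have hGb : ∀ i, (p : ℤ_[p]) ^ b ∣ coeff i G := fun i =>
    le_vp_iff.mp (hb ▸ mu_le G i)
  have hFa' : ∀ i < lF, (p : ℤ_[p]) ^ (a + 1) ∣ coeff i F := fun i h =>
    le_vp_iff.mp (by push_cast; exact lam_min' ha h)
  have hGb' : ∀ i < lG, (p : ℤ_[p]) ^ (b + 1) ∣ coeff i G := fun i h =>
    le_vp_iff.mp (by push_cast; exact lam_min' hb h)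
  have hsplit : ∀ x : ℕ × ℕ, x.1 + x.2 ≤ lF + lG → x ≠ (lF, lG) →
      (p : ℤ_[p]) ^ (a + b + 1) ∣ coeff x.1 F * coeff x.2 G := by
    rintro ⟨x1, x2⟩ hle hne
    have : x1 < lF ∨ x2 < lG := by
      by_contra hc
      push_neg at hc
      have h1 : x1 = lF := by omega
      have h2 : x2 = lG := by omega
      exact hne (by simp [h1, h2])
    rcases this with h | h
    · have : (p : ℤ_[p]) ^ (a + b + 1) = p ^ (a + 1) * p ^ b := by ring
      rw [this]
      exact mul_dvd_mul (hFa' _ h) (hGb _)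
    · have : (p : ℤ_[p]) ^ (a + b + 1) = p ^ a * p ^ (b + 1) := by ring
      rw [this]
      exact mul_dvd_mul (hFa _) (hGb' _ h)
  have h1 : ∀ i, ((a + b : ℕ) : ℕ∞) ≤ vp p (coeff i (F * G)) := by
    intro i
    rw [le_vp_iff, PowerSeries.coeff_mul]
    exact Finset.dvd_sum fun x _ => by
      rw [pow_add]; exact mul_dvd_mul (hFa _) (hGb _)
  have h3 : ∀ i < lF + lG, ((a + b : ℕ) : ℕ∞) + 1 ≤ vp p (coeff i (F * G)) := by
    intro i hi
    rw [show ((a + b : ℕ) : ℕ∞) + 1 = ((a + b + 1 : ℕ) : ℕ∞) by push_cast; ring,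
      le_vp_iff, PowerSeries.coeff_mul]
    refine Finset.dvd_sum fun x hx => ?_
    rw [Finset.HasAntidiagonal.mem_antidiagonal] at hx
    refine hsplit x (by omega) ?_
    rintro rfl
    simp at hx
    omega
  have h2 : vp p (coeff (lF + lG) (F * G)) = ((a + b : ℕ) : ℕ∞) := by
    rw [PowerSeries.coeff_mul]
    have hmem : ((lF, lG) : ℕ × ℕ) ∈ Finset.HasAntidiagonal.antidiagonal (lF + lG) := by
      rw [Finset.HasAntidiagonal.mem_antidiagonal]
    rw [← Finset.add_sum_erase _ _ hmem]
    apply vp_add_eq_left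
    · rw [vp_mul, vp_lam, vp_lam, ha, hb]
      push_cast
      ring
    · rw [show ((a + b : ℕ) : ℕ∞) + 1 = ((a + b + 1 : ℕ) : ℕ∞) by push_cast; ring,
        le_vp_iff]
      refine Finset.dvd_sum fun x hx => ?_
      rw [Finset.mem_erase, Finset.HasAntidiagonal.mem_antidiagonal] at hx
      exact hsplit x (le_of_eq hx.2) hx.1
  obtain ⟨hmu, hlam⟩ := mu_lam_spec h1 h2 h3
  refine ⟨?_, hlam⟩
  rw [hmu, ha, hb]
  push_cast
  ring

end Aux

theorem stmt_10 (p : ℕ) [Fact p.Prime] (n : ℕ) (L : PowerSeries ℤ_[p]) (hL : L ≠ 0)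
    (w : Polynomial ℤ_[p]) (hw : w ≠ 0) (hmuw : mu p (w : PowerSeries ℤ_[p]) = 0)
    (θ : Polynomial ℤ_[p]) (hdeg : θ.degree < (p ^ n : ℕ))
    (hdvd : (((1 + Polynomial.X) ^ p ^ n - 1 : Polynomial ℤ_[p]) : PowerSeries ℤ_[p])
      ∣ ((θ : PowerSeries ℤ_[p]) - (w : PowerSeries ℤ_[p]) * L))
    (hlt : lam p (w : PowerSeries ℤ_[p]) + lam p L < p ^ n) :
    θ ≠ 0 ∧ mu p (θ : PowerSeries ℤ_[p]) = mu p L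
      ∧ lam p (θ : PowerSeries ℤ_[p]) = lam p (w : PowerSeries ℤ_[p]) + lam p L := by
  set N := p ^ n with hN
  have hp := (Fact.out : p.Prime)
  have hNpos : 0 < N := pow_pos hp.pos n
  set Ω : PowerSeries ℤ_[p] := (((1 + Polynomial.X) ^ N - 1 : Polynomial ℤ_[p]) :
    PowerSeries ℤ_[p]) with hΩdef
  have hΩcoeff : ∀ i, PowerSeries.coeff i Ω
      = (N.choose i : ℤ_[p]) - (if i = 0 then 1 else 0) := by
    intro i
    rw [hΩdef, Polynomial.coeff_coe, Polynomial.coeff_sub, Polynomial.coeff_one_add_X_pow,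
      Polynomial.coeff_one]
  -- μ(Ω) = 0 and λ(Ω) = N
  have hΩN : PowerSeries.coeff N Ω = 1 := by
    rw [hΩcoeff, if_neg hNpos.ne', Nat.choose_self]
    simp
  have hΩlow : ∀ i < N, (0 : ℕ∞) + 1 ≤ vp p (PowerSeries.coeff i Ω) := by
    intro i hi
    rw [hΩcoeff]
    by_cases h0 : i = 0
    · rw [h0, if_pos rfl, Nat.choose_zero_right]
      simp only [Nat.cast_one, sub_self]
      rw [show (0 : ℕ∞) + 1 = ((1 : ℕ) : ℕ∞) by rfl]
      exact le_vp_iff.mpr (dvd_zero _)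
    · rw [if_neg h0, sub_zero, show (0 : ℕ∞) + 1 = ((1 : ℕ) : ℕ∞) by rfl]
      refine le_vp_iff.mpr ?_
      rw [pow_one]
      exact_mod_cast Nat.cast_dvd_cast (α := ℤ_[p])
        (hp.dvd_choose_pow h0 (Nat.ne_of_lt hi))
  have hΩspec : mu p Ω = ((0 : ℕ) : ℕ∞) ∧ lam p Ω = N := by
    refine mu_lam_spec (fun i => by simp) ?_ (by simpa using hΩlow)
    rw [hΩN]
    simpa using vp_one
  have hΩne : Ω ≠ 0 := by
    intro h
    have := mu_eq_top_iff.mpr h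
    rw [hΩspec.1] at this
    simp at this
  -- set up F = wL
  have hwc : (w : PowerSeries ℤ_[p]) ≠ 0 := fun h => hw (Polynomial.coe_eq_zero_iff.mp h)
  set F : PowerSeries ℤ_[p] := (w : PowerSeries ℤ_[p]) * L with hFdef
  have hFne : F ≠ 0 := mul_ne_zero hwc hL
  obtain ⟨m, hm⟩ := mu_ne_top hL
  obtain ⟨hmuF, hlamF⟩ := mu_lam_mul hwc hL
  rw [hmuw, zero_add, hm] at hmuF
  set l := lam p (w : PowerSeries ℤ_[p]) + lam p L with hldef
  have hlN : l < N := hlt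
  obtain ⟨H, hH⟩ := hdvd
  -- θ = F + ΩH coefficientwise
  have hθeq : ∀ i, PowerSeries.coeff i (θ : PowerSeries ℤ_[p])
      = PowerSeries.coeff i F + PowerSeries.coeff i (Ω * H) := by
    intro i
    have : (θ : PowerSeries ℤ_[p]) = F + Ω * H := by
      rw [← hH, hFdef]; ring
    rw [this, map_add]
  have hθhigh : ∀ i, N ≤ i → PowerSeries.coeff i (θ : PowerSeries ℤ_[p]) = 0 := by
    intro i hi
    rw [Polynomial.coeff_coe]
    exact Polynomial.coeff_eq_zero_of_degree_lt
      (hdeg.trans_le (by exact_mod_cast Nat.cast_le.mpr hi))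
  -- μ(H) ≥ m
  have hmH : (m : ℕ∞) ≤ mu p H := by
    by_cases hH0 : H = 0
    · rw [hH0, mu_eq_top_iff.mpr rfl]; exact le_top
    · obtain ⟨hmuΩH, hlamΩH⟩ := mu_lam_mul hΩne hH0
      rw [hΩspec.1] at hmuΩH
      rw [hΩspec.2] at hlamΩH
      have hθ0 : PowerSeries.coeff (N + lam p H) (θ : PowerSeries ℤ_[p]) = 0 :=
        hθhigh _ (Nat.le_add_right _ _)
      have hcoeff : PowerSeries.coeff (N + lam p H) (Ω * H)
          = - PowerSeries.coeff (N + lam p H) F := by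
        have := hθeq (N + lam p H)
        rw [hθ0] at this
        linear_combination -this
      have hvpΩH : vp p (PowerSeries.coeff (N + lam p H) (Ω * H)) = mu p H := by
        have := vp_lam (Ω * H)
        rw [hlamΩH] at this
        rw [this, hmuΩH]
        simp
      calc (m : ℕ∞) = mu p F := hmuF.symm
        _ ≤ vp p (PowerSeries.coeff (N + lam p H) F) := mu_le F _
        _ = vp p (PowerSeries.coeff (N + lam p H) (Ω * H)) := by
            rw [hcoeff, vp_neg]
        _ = mu p H := hvpΩH
  -- key: coefficients of ΩH below N have valuation ≥ m+1
  have key : ∀ i < N, (m : ℕ∞) + 1 ≤ vp p (PowerSeries.coeff i (Ω * H)) := by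
    intro i hi
    rw [show (m : ℕ∞) + 1 = ((m + 1 : ℕ) : ℕ∞) by push_cast; ring, le_vp_iff,
      PowerSeries.coeff_mul]
    refine Finset.dvd_sum fun x hx => ?_
    rw [Finset.HasAntidiagonal.mem_antidiagonal] at hx
    have hΩd : (p : ℤ_[p]) ∣ PowerSeries.coeff x.1 Ω := by
      have hx1 : x.1 < N := lt_of_le_of_lt (by omega) hi
      rw [hΩcoeff]
      by_cases h0 : x.1 = 0
      · rw [h0, if_pos rfl, Nat.choose_zero_right]
        simp
      · rw [if_neg h0, sub_zero]
        exact_mod_cast Nat.cast_dvd_cast (α := ℤ_[p])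
          (hp.dvd_choose_pow h0 (Nat.ne_of_lt hx1))
    have hHd : (p : ℤ_[p]) ^ m ∣ PowerSeries.coeff x.2 H :=
      le_vp_iff.mp (le_trans hmH (mu_le H x.2))
    have : (p : ℤ_[p]) ^ (m + 1) = p * p ^ m := by ring
    rw [this]
    exact mul_dvd_mul hΩd hHd
  -- conclude
  have hFm : ∀ i, (p : ℤ_[p]) ^ m ∣ PowerSeries.coeff i F := fun i =>
    le_vp_iff.mp (hmuF ▸ mu_le F i)
  have h1 : ∀ i, (m : ℕ∞) ≤ vp p (PowerSeries.coeff i (θ : PowerSeries ℤ_[p])) := by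
    intro i
    by_cases hi : i < N
    · rw [hθeq i, ← hm]
      rw [hm]
      refine le_vp_iff.mpr (dvd_add (hFm i) ?_)
      have := key i hi
      rw [show (m : ℕ∞) + 1 = ((m + 1 : ℕ) : ℕ∞) by push_cast; ring] at this
      exact (pow_dvd_pow _ (Nat.le_succ m)).trans (le_vp_iff.mp this)
    · rw [hθhigh i (by omega)]
      rw [show vp p (0 : ℤ_[p]) = ⊤ from vp_eq_top_iff.mpr rfl]
      exact le_top
  have h2 : vp p (PowerSeries.coeff l (θ : PowerSeries ℤ_[p])) = (m : ℕ∞) := by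
    rw [hθeq l]
    apply vp_add_eq_left
    · have := vp_lam F
      rw [hlamF, hmuF] at this
      exact this
    · have := key l hlN
      rwa [show (m : ℕ∞) + 1 = ((m : ℕ) + 1 : ℕ∞) by rfl] at this
  have h3 : ∀ i < l, (m : ℕ∞) + 1
      ≤ vp p (PowerSeries.coeff i (θ : PowerSeries ℤ_[p])) := by
    intro i hi
    rw [hθeq i, show (m : ℕ∞) + 1 = ((m + 1 : ℕ) : ℕ∞) by push_cast; ring, le_vp_iff]
    refine dvd_add ?_ ?_
    · have := lam_min' hmuF (hlamF ▸ hi)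
      rw [show (m : ℕ∞) + 1 = ((m + 1 : ℕ) : ℕ∞) by push_cast; ring] at this
      exact le_vp_iff.mp this
    · have := key i (hi.trans hlN)
      rw [show (m : ℕ∞) + 1 = ((m + 1 : ℕ) : ℕ∞) by push_cast; ring] at this
      exact le_vp_iff.mp this
  obtain ⟨hmuθ, hlamθ⟩ := mu_lam_spec h1 h2 h3
  refine ⟨?_, by rw [hmuθ, hm], hlamθ⟩
  intro hθ0
  have : (θ : PowerSeries ℤ_[p]) = 0 := by rw [hθ0]; simp
  have := mu_eq_top_iff.mpr this
  rw [hmuθ] at this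
  simp at this
end

section
/- Let p be a prime, let n ≥ 0 be an even integer, and set q_n = (p^n − 1)/(p + 1). Let L ∈ ℤ_p⟦T⟧ be nonzero with λ(L) < p^n − q_n, and let θ ∈ ℤ_p[T] be a polynomial of degree < p^n such that ω_n divides θ − ω_n^−·L in ℤ_p⟦T⟧, where ω_n^− = ∏_{1 ≤ i ≤ n, i odd} Φ_{p^i}(1+T). Then θ ≠ 0, μ(θ) = μ(L), and λ(θ) = λ(L) + q_n. -/
section Aux

open Polynomial

variable {p : ℕ} [hp : Fact p.Prime]

lemma aux_toZMod_eq_zero_iff (x : ℤ_[p]) :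
    (PadicInt.toZMod x = 0) ↔ (p : ℤ_[p]) ∣ x := by
  rw [← RingHom.mem_ker, PadicInt.ker_toZMod, PadicInt.maximalIdeal_eq_span_p,
    Ideal.mem_span_singleton]

lemma aux_pow_dvd_iff_le_vp (k : ℕ) (x : ℤ_[p]) :
    (p : ℤ_[p]) ^ k ∣ x ↔ (k : ℕ∞) ≤ vp p x := by
  rcases eq_or_ne x 0 with rfl | hx
  · simp [vp]
  · rw [vp, if_neg hx, ← Ideal.mem_span_singleton,
      PadicInt.mem_span_pow_iff_le_valuation x hx, Nat.cast_le]

lemma aux_enat_sandwich {a : ℕ∞} {m : ℕ} (h1 : (m : ℕ∞) ≤ a) (h2 : a < (m : ℕ∞) + 1) :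
    a = (m : ℕ∞) := by
  cases a with
  | top => exact absurd h2 (by simp)
  | coe j =>
    rw [show ((m : ℕ∞) + 1) = ((m + 1 : ℕ) : ℕ∞) by push_cast; ring] at h2
    rw [Nat.cast_le] at h1
    rw [Nat.cast_lt] at h2
    rw [Nat.cast_inj]
    omega

lemma aux_vp_eq_iff (k : ℕ) (x : ℤ_[p]) :
    vp p x = (k : ℕ∞) ↔ ((p : ℤ_[p]) ^ k ∣ x ∧ ¬ (p : ℤ_[p]) ^ (k + 1) ∣ x) := by
  rw [aux_pow_dvd_iff_le_vp, aux_pow_dvd_iff_le_vp]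
  constructor
  · intro h
    rw [h]
    refine ⟨le_refl _, ?_⟩
    rw [Nat.cast_le]
    omega
  · rintro ⟨h1, h2⟩
    push_cast at h2
    exact aux_enat_sandwich h1 (by rwa [not_le] at h2)

/-- BUILD: compute `mu` and `lam` from divisibility data. -/
lemma aux_mu_lam_eq {F : PowerSeries ℤ_[p]} {m l : ℕ}
    (h1 : ∀ i, (p : ℤ_[p]) ^ m ∣ PowerSeries.coeff i F)
    (h2 : ¬ (p : ℤ_[p]) ^ (m + 1) ∣ PowerSeries.coeff l F)
    (h3 : ∀ i < l, (p : ℤ_[p]) ^ (m + 1) ∣ PowerSeries.coeff i F) :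
    mu p F = (m : ℕ∞) ∧ lam p F = l := by
  have hvl : vp p (PowerSeries.coeff l F) = (m : ℕ∞) :=
    (aux_vp_eq_iff m _).2 ⟨h1 l, h2⟩
  have hmu : mu p F = (m : ℕ∞) := by
    refine le_antisymm ?_ (le_iInf fun i => (aux_pow_dvd_iff_le_vp m _).1 (h1 i))
    calc mu p F ≤ vp p (PowerSeries.coeff l F) := iInf_le _ l
      _ = (m : ℕ∞) := hvl
  refine ⟨hmu, ?_⟩
  have hl : l ∈ { i : ℕ | vp p (PowerSeries.coeff i F) = mu p F } := by
    rw [Set.mem_setOf_eq, hmu]; exact hvl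
  refine le_antisymm (Nat.sInf_le hl) (le_csInf ⟨l, hl⟩ ?_)
  intro i hi
  by_contra hlt
  push_neg at hlt
  have hd := (aux_pow_dvd_iff_le_vp (m + 1) _).1 (h3 i hlt)
  rw [Set.mem_setOf_eq, hmu] at hi
  rw [hi] at hd
  rw [Nat.cast_le] at hd
  omega

/-- EXTRACT: from a nonzero power series get the divisibility data. -/
lemma aux_exists_mu {F : PowerSeries ℤ_[p]} (hF : F ≠ 0) :
    ∃ m : ℕ, mu p F = (m : ℕ∞) ∧ (∀ i, (p : ℤ_[p]) ^ m ∣ PowerSeries.coeff i F)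
      ∧ ¬ (p : ℤ_[p]) ^ (m + 1) ∣ PowerSeries.coeff (lam p F) F
      ∧ ∀ i < lam p F, (p : ℤ_[p]) ^ (m + 1) ∣ PowerSeries.coeff i F := by
  obtain ⟨j, hj⟩ : ∃ j, PowerSeries.coeff j F ≠ 0 := by
    by_contra h
    push_neg at h
    exact hF (PowerSeries.ext fun i => by simp [h i])
  have hjtop : vp p (PowerSeries.coeff j F) ≠ ⊤ := by
    rw [vp, if_neg hj]; exact ENat.coe_ne_top _
  have hmutop : mu p F ≠ ⊤ := fun h =>
    hjtop (le_antisymm le_top (h ▸ iInf_le (fun i => vp p (PowerSeries.coeff i F)) j))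
  obtain ⟨m, hm0⟩ := WithTop.ne_top_iff_exists.1 hmutop
  have hm : mu p F = (m : ℕ∞) := hm0.symm
  have hge : ∀ i, (m : ℕ∞) ≤ vp p (PowerSeries.coeff i F) := fun i => by
    rw [← hm]; exact iInf_le (fun i => vp p (PowerSeries.coeff i F)) i
  have hlt : mu p F < (m : ℕ∞) + 1 := by
    rw [hm]; exact_mod_cast Nat.lt_succ_self m
  obtain ⟨i0, hi0⟩ : ∃ i, vp p (PowerSeries.coeff i F) < (m : ℕ∞) + 1 := by
    rw [← iInf_lt_iff]; exact hlt
  have hi0' : vp p (PowerSeries.coeff i0 F) = mu p F := by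
    rw [hm]; exact aux_enat_sandwich (hge i0) hi0
  have hmem : lam p F ∈ { i : ℕ | vp p (PowerSeries.coeff i F) = mu p F } :=
    Nat.sInf_mem (⟨i0, hi0'⟩ :
      { i : ℕ | vp p (PowerSeries.coeff i F) = mu p F }.Nonempty)
  rw [Set.mem_setOf_eq, hm] at hmem
  obtain ⟨hd1, hd2⟩ := (aux_vp_eq_iff m _).1 hmem
  refine ⟨m, hm, fun i => (aux_pow_dvd_iff_le_vp m _).2 (hge i), hd2, ?_⟩
  intro i hi
  have hne : vp p (PowerSeries.coeff i F) ≠ (m : ℕ∞) := by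
    intro h
    have : lam p F ≤ i := Nat.sInf_le (by rw [Set.mem_setOf_eq, h, hm])
    omega
  have : (m : ℕ∞) + 1 ≤ vp p (PowerSeries.coeff i F) :=
    (ENat.add_one_le_iff (ENat.coe_ne_top m)).2 (lt_of_le_of_ne (hge i) (Ne.symm hne))
  exact (aux_pow_dvd_iff_le_vp (m + 1) _).2 (by push_cast; exact this)

/-- Division of a power series by a constant that divides all coefficients. -/
lemma aux_exists_C_mul {c : ℤ_[p]} {F : PowerSeries ℤ_[p]}
    (h : ∀ i, c ∣ PowerSeries.coeff i F) :
    ∃ G, F = PowerSeries.C c * G := by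
  refine ⟨PowerSeries.mk fun i => (h i).choose, PowerSeries.ext fun i => ?_⟩
  rw [PowerSeries.coeff_C_mul, PowerSeries.coeff_mk]
  exact (h i).choose_spec

lemma aux_coe_map (f : Polynomial ℤ_[p]) :
    ((f.map (PadicInt.toZMod : ℤ_[p] →+* ZMod p) : Polynomial (ZMod p)) :
      PowerSeries (ZMod p)) = PowerSeries.map (PadicInt.toZMod) (f : PowerSeries ℤ_[p]) :=
  PowerSeries.ext fun i => by
    simp [Polynomial.coeff_coe, PowerSeries.coeff_map, Polynomial.coeff_map]

lemma aux_cyclo_comp (k : ℕ) :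
    (cyclotomic (p ^ (k + 1)) (ZMod p)).comp (1 + X) = X ^ (p ^ (k + 1) - p ^ k) := by
  have frob : ∀ j : ℕ, ((1 : Polynomial (ZMod p)) + X) ^ p ^ j = 1 + X ^ p ^ j := fun j => by
    rw [add_pow_char_pow, one_pow]
  have hX : (X : Polynomial (ZMod p)) ^ p ^ k ≠ 0 := pow_ne_zero _ X_ne_zero
  apply mul_right_cancel₀ hX
  have h2 := congrArg (fun q : Polynomial (ZMod p) => q.comp (1 + X))
    (cyclotomic_prime_pow_mul_X_pow_sub_one (ZMod p) p k)
  simp only [mul_comp, sub_comp, pow_comp, X_comp, one_comp] at h2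
  rw [frob, frob, add_sub_cancel_left, add_sub_cancel_left] at h2
  rw [h2, ← pow_add, Nat.sub_add_cancel (Nat.pow_le_pow_right hp.out.pos (Nat.le_succ k))]

lemma aux_map_prod (n : ℕ) :
    ((∏ i ∈ (Finset.Icc 1 n).filter (fun i => Odd i),
        (cyclotomic (p ^ i) ℤ_[p]).comp (1 + X)).map
          (PadicInt.toZMod : ℤ_[p] →+* ZMod p))
      = X ^ (∑ i ∈ (Finset.Icc 1 n).filter (fun i => Odd i), (p ^ i - p ^ (i - 1))) := by
  rw [Polynomial.map_prod, ← Finset.prod_pow_eq_pow_sum]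
  refine Finset.prod_congr rfl fun i hi => ?_
  have hi1 : 1 ≤ i := (Finset.mem_Icc.1 (Finset.mem_filter.1 hi).1).1
  obtain ⟨k, rfl⟩ : ∃ k, i = k + 1 := ⟨i - 1, by omega⟩
  rw [Polynomial.map_comp, map_cyclotomic]
  simp only [Polynomial.map_add, Polynomial.map_one, Polynomial.map_X]
  rw [aux_cyclo_comp]
  norm_num

lemma aux_map_omega (n : ℕ) :
    ((((1 + X) ^ p ^ n - 1 : Polynomial ℤ_[p])).map
        (PadicInt.toZMod : ℤ_[p] →+* ZMod p)) = X ^ p ^ n := by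
  simp only [Polynomial.map_sub, Polynomial.map_pow, Polynomial.map_add, Polynomial.map_one,
    Polynomial.map_X]
  rw [add_pow_char_pow, one_pow, add_sub_cancel_left]

lemma aux_sum_exp (k : ℕ) :
    (p + 1) * (∑ i ∈ (Finset.Icc 1 (2 * k)).filter (fun i => Odd i),
      (p ^ i - p ^ (i - 1))) + 1 = p ^ (2 * k) := by
  induction k with
  | zero => simp
  | succ k ih =>
    have hstep : (Finset.Icc 1 (2 * (k + 1))).filter (fun i => Odd i)
        = insert (2 * k + 1) ((Finset.Icc 1 (2 * k)).filter (fun i => Odd i)) := by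
      ext i
      simp only [Finset.mem_filter, Finset.mem_Icc, Finset.mem_insert, Nat.odd_iff]
      omega
    have hnotmem : 2 * k + 1 ∉ (Finset.Icc 1 (2 * k)).filter (fun i => Odd i) := by
      simp only [Finset.mem_filter, Finset.mem_Icc]
      omega
    rw [hstep, Finset.sum_insert hnotmem]
    set S := ∑ i ∈ (Finset.Icc 1 (2 * k)).filter (fun i => Odd i), (p ^ i - p ^ (i - 1)) with hS
    set a := p ^ (2 * k) with ha
    have h1 : 1 ≤ a := Nat.one_le_pow _ _ hp.out.pos
    have e1 : p ^ (2 * k + 1) = p * a := by rw [ha, pow_succ, mul_comm]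
    have e2 : p ^ (2 * (k + 1)) = p * (p * a) := by
      rw [ha, ← pow_succ', ← pow_succ']; ring_nf
    have e3 : (2 * k + 1) - 1 = 2 * k := by omega
    rw [e2, e3, e1, ← ha]
    have hle : a ≤ p * a := Nat.le_mul_of_pos_left a hp.out.pos
    zify [hle, h1] at ih ⊢
    linear_combination ih

lemma aux_sum_exp' (n : ℕ) (hn : Even n) :
    (p + 1) * (∑ i ∈ (Finset.Icc 1 n).filter (fun i => Odd i),
      (p ^ i - p ^ (i - 1))) + 1 = p ^ n := by
  obtain ⟨k, hk⟩ := hn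
  have h2 : n = 2 * k := by omega
  subst h2
  exact aux_sum_exp k

/-- If `F = C (p^j) * F'` and `F'` maps to `0` mod `p`, then `p^(j+1)` divides all
coefficients of `F`. -/
lemma aux_step_dvd {j : ℕ} {F F' : PowerSeries ℤ_[p]}
    (hF : F = PowerSeries.C ((p : ℤ_[p]) ^ j) * F')
    (hF' : PowerSeries.map (PadicInt.toZMod : ℤ_[p] →+* ZMod p) F' = 0) (i : ℕ) :
    (p : ℤ_[p]) ^ (j + 1) ∣ PowerSeries.coeff i F := by
  have h1 : PadicInt.toZMod (PowerSeries.coeff i F') = 0 := by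
    have := congrArg (PowerSeries.coeff i) hF'
    rwa [PowerSeries.coeff_map, map_zero] at this
  obtain ⟨c, hc⟩ := (aux_toZMod_eq_zero_iff _).1 h1
  refine ⟨c, ?_⟩
  rw [hF, PowerSeries.coeff_C_mul, hc]
  ring

end Aux

theorem stmt_11 (p : ℕ) [Fact p.Prime] (n : ℕ) (hn : Even n)
    (L : PowerSeries ℤ_[p]) (hL : L ≠ 0) (hlam : lam p L < p ^ n - (p ^ n - 1) / (p + 1))
    (θ : Polynomial ℤ_[p]) (hdeg : θ.degree < (p ^ n : ℕ))
    (hdvd : (((1 + Polynomial.X) ^ p ^ n - 1 : Polynomial ℤ_[p]) : PowerSeries ℤ_[p])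
      ∣ ((θ : PowerSeries ℤ_[p])
        - ((∏ i ∈ (Finset.Icc 1 n).filter (fun i => Odd i),
            (Polynomial.cyclotomic (p ^ i) ℤ_[p]).comp (1 + Polynomial.X) : Polynomial ℤ_[p]) : PowerSeries ℤ_[p]) * L)) :
    θ ≠ 0 ∧ mu p (θ : PowerSeries ℤ_[p]) = mu p L
      ∧ lam p (θ : PowerSeries ℤ_[p]) = lam p L + (p ^ n - 1) / (p + 1) := by
  classical
  have hpp : p.Prime := Fact.out
  have hpne : (p : ℤ_[p]) ≠ 0 := Nat.cast_ne_zero.mpr hpp.ne_zero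
  set Wp : Polynomial ℤ_[p] :=
    ∏ i ∈ (Finset.Icc 1 n).filter (fun i => Odd i),
      (Polynomial.cyclotomic (p ^ i) ℤ_[p]).comp (1 + Polynomial.X) with hWp
  set Ωp : Polynomial ℤ_[p] := (1 + Polynomial.X) ^ p ^ n - 1 with hΩp
  set S : ℕ := ∑ i ∈ (Finset.Icc 1 n).filter (fun i => Odd i), (p ^ i - p ^ (i - 1)) with hS
  have hsum : (p + 1) * S + 1 = p ^ n := aux_sum_exp' n hn
  have hqS : (p ^ n - 1) / (p + 1) = S := by
    have h1 : p ^ n - 1 = (p + 1) * S := by omega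
    rw [h1, Nat.mul_div_cancel_left _ (by omega)]
  have hSlt : S < p ^ n := by
    have := Nat.le_mul_of_pos_left S (show 0 < p + 1 by omega)
    omega
  set l : ℕ := lam p L with hldef
  have hl : l + S < p ^ n := by
    rw [hqS] at hlam
    omega
  -- data for L
  obtain ⟨m, hmuL, hd1, hd2, hd3⟩ := aux_exists_mu hL
  rw [← hldef] at hd2 hd3
  obtain ⟨L0, hL0⟩ := aux_exists_C_mul hd1
  have hpm : ((p : ℤ_[p]) ^ m) ≠ 0 := pow_ne_zero _ hpne
  have hL0l : ¬ (p : ℤ_[p]) ∣ PowerSeries.coeff l L0 := by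
    rintro ⟨c, hc⟩
    apply hd2
    refine ⟨c, ?_⟩
    rw [hL0, PowerSeries.coeff_C_mul, hc]
    ring
  have hL0i : ∀ i < l, (p : ℤ_[p]) ∣ PowerSeries.coeff i L0 := by
    intro i hi
    obtain ⟨c, hc⟩ := hd3 i hi
    rw [hL0, PowerSeries.coeff_C_mul] at hc
    refine ⟨c, mul_left_cancel₀ hpm ?_⟩
    rw [hc]
    ring
  -- the equation θ = Wp * L + Ωp * G
  obtain ⟨G, hG⟩ := hdvd
  have hθeq : (θ : PowerSeries ℤ_[p]) = (Wp : PowerSeries ℤ_[p]) * L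
      + (Ωp : PowerSeries ℤ_[p]) * G := by
    have := sub_eq_iff_eq_add.1 hG
    rw [this]
    ring
  -- images mod p
  have hΦΩ : PowerSeries.map (PadicInt.toZMod : ℤ_[p] →+* ZMod p) (Ωp : PowerSeries ℤ_[p])
      = (PowerSeries.X : PowerSeries (ZMod p)) ^ p ^ n := by
    rw [← aux_coe_map, hΩp, aux_map_omega, Polynomial.coe_pow, Polynomial.coe_X]
  have hΦW : PowerSeries.map (PadicInt.toZMod : ℤ_[p] →+* ZMod p) (Wp : PowerSeries ℤ_[p])
      = (PowerSeries.X : PowerSeries (ZMod p)) ^ S := by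
    rw [← aux_coe_map, hWp, aux_map_prod, Polynomial.coe_pow, Polynomial.coe_X, hS]
  -- vanishing of high coefficients after dividing by powers of p
  have hhigh : ∀ (j : ℕ) (θ' : PowerSeries ℤ_[p]),
      (θ : PowerSeries ℤ_[p]) = PowerSeries.C ((p : ℤ_[p]) ^ j) * θ' →
      ∀ i, p ^ n ≤ i → PowerSeries.coeff i θ' = 0 := by
    intro j θ' hθ' i hi
    have h1 : PowerSeries.coeff i (θ : PowerSeries ℤ_[p]) = 0 := by
      rw [Polynomial.coeff_coe]
      exact Polynomial.coeff_eq_zero_of_degree_lt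
        (lt_of_lt_of_le hdeg (by exact_mod_cast hi))
    rw [hθ', PowerSeries.coeff_C_mul] at h1
    exact (mul_eq_zero.1 h1).resolve_left (pow_ne_zero j hpne)
  -- key induction: p^j divides θ and G for all j ≤ m
  have key : ∀ j, j ≤ m →
      (∀ i, (p : ℤ_[p]) ^ j ∣ PowerSeries.coeff i (θ : PowerSeries ℤ_[p]))
      ∧ (∀ i, (p : ℤ_[p]) ^ j ∣ PowerSeries.coeff i G) := by
    intro j
    induction j with
    | zero => intro _; constructor <;> intro i <;> simp
    | succ j ih =>
      intro hjm
      obtain ⟨ihθ, ihG⟩ := ih (by omega)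
      obtain ⟨θ', hθ'⟩ := aux_exists_C_mul ihθ
      obtain ⟨G', hG'⟩ := aux_exists_C_mul ihG
      have hCne : (PowerSeries.C ((p : ℤ_[p]) ^ j)) ≠ 0 := fun h => pow_ne_zero j hpne (by
        have := congrArg (PowerSeries.coeff 0) h
        simpa using this)
      have hCm : PowerSeries.C ((p : ℤ_[p]) ^ m)
          = PowerSeries.C ((p : ℤ_[p]) ^ j) * PowerSeries.C ((p : ℤ_[p]) ^ (m - j)) := by
        rw [← map_mul, ← pow_add, Nat.add_sub_cancel' (by omega : j ≤ m)]
      have heq2 : θ' = PowerSeries.C ((p : ℤ_[p]) ^ (m - j)) * ((Wp : PowerSeries ℤ_[p]) * L0)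
          + (Ωp : PowerSeries ℤ_[p]) * G' := by
        apply mul_left_cancel₀ hCne
        rw [← hθ', hθeq, hL0, hG', hCm]
        ring
      have hmj : PadicInt.toZMod ((p : ℤ_[p]) ^ (m - j)) = 0 := by
        rw [map_pow, (aux_toZMod_eq_zero_iff _).2 dvd_rfl, zero_pow (by omega : m - j ≠ 0)]
      have hΦ := congrArg (PowerSeries.map (PadicInt.toZMod : ℤ_[p] →+* ZMod p)) heq2
      simp only [map_add, map_mul, PowerSeries.map_C, hmj, map_zero, zero_mul, zero_add,
        hΦΩ] at hΦ
      have hG'map : PowerSeries.map (PadicInt.toZMod : ℤ_[p] →+* ZMod p) G' = 0 := by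
        apply PowerSeries.ext
        intro i
        have h2 := congrArg (PowerSeries.coeff (i + p ^ n)) hΦ
        rw [PowerSeries.coeff_X_pow_mul, PowerSeries.coeff_map,
          hhigh j θ' hθ' (i + p ^ n) (by omega), map_zero] at h2
        rw [← h2]
        simp
      have hθ'map : PowerSeries.map (PadicInt.toZMod : ℤ_[p] →+* ZMod p) θ' = 0 := by
        rw [hΦ, hG'map, mul_zero]
      exact ⟨aux_step_dvd hθ' hθ'map, aux_step_dvd hG' hG'map⟩
  -- the case j = m
  obtain ⟨hθm, hGm⟩ := key m le_rfl
  obtain ⟨θ0, hθ0⟩ := aux_exists_C_mul hθm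
  obtain ⟨G0, hG0⟩ := aux_exists_C_mul hGm
  have hCne : (PowerSeries.C ((p : ℤ_[p]) ^ m)) ≠ 0 := fun h => hpm (by
    have := congrArg (PowerSeries.coeff 0) h
    simpa using this)
  have heqm : θ0 = (Wp : PowerSeries ℤ_[p]) * L0 + (Ωp : PowerSeries ℤ_[p]) * G0 := by
    apply mul_left_cancel₀ hCne
    rw [← hθ0, hθeq, hL0, hG0]
    ring
  have hΦm := congrArg (PowerSeries.map (PadicInt.toZMod : ℤ_[p] →+* ZMod p)) heqm
  rw [map_add, map_mul, map_mul, hΦΩ, hΦW] at hΦm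
  -- coefficient computations mod p
  have hcoefflS : ¬ (p : ℤ_[p]) ∣ PowerSeries.coeff (l + S) θ0 := by
    intro hdvd'
    have h2 := congrArg (PowerSeries.coeff (l + S)) hΦm
    rw [PowerSeries.coeff_map, map_add, PowerSeries.coeff_X_pow_mul', if_pos (by omega : S ≤ l + S),
      PowerSeries.coeff_X_pow_mul', if_neg (by omega : ¬ p ^ n ≤ l + S), add_zero,
      Nat.add_sub_cancel, PowerSeries.coeff_map] at h2
    rw [(aux_toZMod_eq_zero_iff _).2 hdvd'] at h2
    exact hL0l ((aux_toZMod_eq_zero_iff _).1 h2.symm)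
  have hcoeffi : ∀ i < l + S, (p : ℤ_[p]) ∣ PowerSeries.coeff i θ0 := by
    intro i hi
    have h2 := congrArg (PowerSeries.coeff i) hΦm
    rw [PowerSeries.coeff_map, map_add, PowerSeries.coeff_X_pow_mul',
      PowerSeries.coeff_X_pow_mul', if_neg (by omega : ¬ p ^ n ≤ i), add_zero] at h2
    apply (aux_toZMod_eq_zero_iff _).1
    rw [h2]
    by_cases hcase : S ≤ i
    · rw [if_pos hcase, PowerSeries.coeff_map,
        (aux_toZMod_eq_zero_iff _).2 (hL0i (i - S) (by omega))]
    · rw [if_neg hcase]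
  -- assemble
  have hB1 : ∀ i, (p : ℤ_[p]) ^ m ∣ PowerSeries.coeff i (θ : PowerSeries ℤ_[p]) := hθm
  have hB2 : ¬ (p : ℤ_[p]) ^ (m + 1) ∣ PowerSeries.coeff (l + S) (θ : PowerSeries ℤ_[p]) := by
    rintro ⟨c, hc⟩
    apply hcoefflS
    refine ⟨c, mul_left_cancel₀ hpm ?_⟩
    rw [hθ0, PowerSeries.coeff_C_mul] at hc
    rw [hc]
    ring
  have hB3 : ∀ i < l + S, (p : ℤ_[p]) ^ (m + 1) ∣ PowerSeries.coeff i (θ : PowerSeries ℤ_[p]) := by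
    intro i hi
    obtain ⟨c, hc⟩ := hcoeffi i hi
    refine ⟨c, ?_⟩
    rw [hθ0, PowerSeries.coeff_C_mul, hc]
    ring
  obtain ⟨hmuθ, hlamθ⟩ := aux_mu_lam_eq hB1 hB2 hB3
  refine ⟨?_, ?_, ?_⟩
  · intro h
    apply hB2
    rw [h]
    simp
  · rw [hmuθ, hmuL]
  · rw [hlamθ, hqS, hldef]
end
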